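/- Suppose B is a symmetric matrix with ρ(B) < 1 whose eigenvalues are all positive. Then the scheme Ũ^{n+1} = BUⁿ, U^{n+1} = Ũ^{n+1}/‖Ũ^{n+1}‖ is energy diminishing for the energy E(U) = UᵀAU with A = (1/k)(B^{-1} − I) for any k > 0; i.e., the Rayleigh quotient of B^{-1} is non-increasing along the normalized iteration, equivalently (Uⁿ)ᵀB^{-1}Uⁿ is non-increasing in n. -/

import Mathlib

open Matrix

noncomputable section

-- symmetry of quadratic form pairing
lemma dot_symm {n : ℕ} {M : Matrix (Fin n) (Fin n) ℝ} (hM : M.IsHermitian)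
    (x y : Fin n → ℝ) : x ⬝ᵥ (M *ᵥ y) = y ⬝ᵥ (M *ᵥ x) := by
  have hMs : Mᵀ = M := by
    rw [← conjTranspose_eq_transpose_of_trivial]; exact hM
  rw [dotProduct_mulVec, ← mulVec_transpose, hMs, dotProduct_comm]

-- Cauchy–Schwarz for a positive semidefinite pairing
lemma cs_posdef {n : ℕ} {M : Matrix (Fin n) (Fin n) ℝ} (hM : M.PosDef)
    (x y : Fin n → ℝ) :
    (x ⬝ᵥ (M *ᵥ y))^2 ≤ (x ⬝ᵥ (M *ᵥ x)) * (y ⬝ᵥ (M *ᵥ y)) := by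
  have hq : ∀ t : ℝ, 0 ≤ (y ⬝ᵥ (M *ᵥ y)) * (t * t) + (2 * (x ⬝ᵥ (M *ᵥ y))) * t
      + (x ⬝ᵥ (M *ᵥ x)) := by
    intro t
    have h := hM.posSemidef.dotProduct_mulVec_nonneg (x + t • y)
    simp only [star_trivial] at h
    have hexp : (x + t • y) ⬝ᵥ (M *ᵥ (x + t • y)) =
        (y ⬝ᵥ (M *ᵥ y)) * (t * t) + (2 * (x ⬝ᵥ (M *ᵥ y))) * t + (x ⬝ᵥ (M *ᵥ x)) := by
      rw [mulVec_add, mulVec_smul, add_dotProduct, smul_dotProduct,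
        dotProduct_add, dotProduct_add, dotProduct_smul, dotProduct_smul,
        dot_symm hM.isHermitian y x]
      simp only [smul_eq_mul]
      ring
    linarith [hexp ▸ h]
  have := discrim_le_zero hq
  rw [discrim] at this
  nlinarith

lemma posdef_of_spectrum {n : ℕ} {B : Matrix (Fin n) (Fin n) ℝ} (hH : B.IsHermitian)
    (hspec : ∀ μ ∈ spectrum ℝ B, 0 < μ) : B.PosDef := by
  refine Matrix.PosDef.of_dotProduct_mulVec_pos hH (fun x hx => ?_)
  have hpos : ∀ i, 0 < hH.eigenvalues i := fun i =>
    hspec _ (hH.eigenvalues_mem_spectrum_real i)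
  set V : Matrix (Fin n) (Fin n) ℝ := (hH.eigenvectorUnitary : Matrix (Fin n) (Fin n) ℝ) with hV
  have hVmem := hH.eigenvectorUnitary.2
  have hVVt : V * star V = 1 := (Matrix.mem_unitaryGroup_iff).mp hVmem
  have hsp := hH.spectral_theorem
  set y : Fin n → ℝ := (star V) *ᵥ x with hy
  have hyne : y ≠ 0 := by
    intro h
    apply hx
    have : V *ᵥ ((star V) *ᵥ x) = V *ᵥ 0 := by rw [← h]
    rwa [mulVec_mulVec, hVVt, one_mulVec, mulVec_zero] at this
  have hcalc : x ⬝ᵥ (B *ᵥ x) = ∑ i, hH.eigenvalues i * (y i * y i) := by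
    conv_lhs => rw [hsp, Unitary.conjStarAlgAut_apply]
    rw [← mulVec_mulVec, ← mulVec_mulVec, dotProduct_mulVec, ← mulVec_transpose,
      ← conjTranspose_eq_transpose_of_trivial, ← hy]
    simp only [dotProduct, mulVec_diagonal, Function.comp_apply, RCLike.ofReal_real_eq_id, id]
    simp only [← hV, ← Matrix.star_eq_conjTranspose, ← hy]
    exact Finset.sum_congr rfl fun i _ => by ring
  rw [star_trivial, hcalc]
  obtain ⟨i0, hi0⟩ := Function.ne_iff.mp hyne
  apply Finset.sum_pos' (fun i _ => mul_nonneg (hpos i).le (mul_self_nonneg _))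
  exact ⟨i0, Finset.mem_univ _, mul_pos (hpos i0) (mul_self_pos.mpr hi0)⟩

theorem stmt16 {n : ℕ} (B : Matrix (Fin n) (Fin n) ℝ) (hB : B.IsSymm)
    (hspec : ∀ μ ∈ spectrum ℝ B, 0 < μ ∧ μ < 1)
    (k : ℝ) (hk : 0 < k)
    (U : ℕ → Fin n → ℝ) (hU0 : U 0 ⬝ᵥ U 0 = 1)
    (hstep : ∀ m : ℕ,
      U (m + 1) = (Real.sqrt ((B *ᵥ U m) ⬝ᵥ (B *ᵥ U m)))⁻¹ • (B *ᵥ U m)) :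
    ∀ m : ℕ,
      (U (m + 1) ⬝ᵥ (((1 / k) • (B⁻¹ - 1)) *ᵥ U (m + 1)) ≤
        U m ⬝ᵥ (((1 / k) • (B⁻¹ - 1)) *ᵥ U m)) ∧
      U (m + 1) ⬝ᵥ (B⁻¹ *ᵥ U (m + 1)) ≤ U m ⬝ᵥ (B⁻¹ *ᵥ U m) := by
  have hH : B.IsHermitian := by
    rwa [Matrix.IsHermitian, conjTranspose_eq_transpose_of_trivial]
  have hPD : B.PosDef := posdef_of_spectrum hH (fun μ hμ => (hspec μ hμ).1)
  have hPDi : B⁻¹.PosDef := hPD.inv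
  have hinvB : B⁻¹ * B = 1 :=
    nonsing_inv_mul B ((isUnit_iff_isUnit_det _).mp hPD.isUnit)
  have hselfpos : ∀ x : Fin n → ℝ, x ≠ 0 → 0 < x ⬝ᵥ x := by
    intro x hx
    refine lt_of_le_of_ne (Finset.sum_nonneg fun i _ => mul_self_nonneg _) ?_
    exact fun h => hx ((dotProduct_self_eq_zero).mp h.symm)
  have hvne : ∀ x : Fin n → ℝ, x ≠ 0 → B *ᵥ x ≠ 0 := by
    intro x hx h
    apply hx
    have := congrArg (fun w => B⁻¹ *ᵥ w) h
    simpa [mulVec_mulVec, hinvB] using this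
  have hnorm : ∀ m, U m ⬝ᵥ U m = 1 := by
    intro m
    induction m with
    | zero => exact hU0
    | succ p ih =>
      have hune : U p ≠ 0 := fun h => by simp [h] at ih
      have hb : 0 < (B *ᵥ U p) ⬝ᵥ (B *ᵥ U p) := hselfpos _ (hvne _ hune)
      rw [hstep p, smul_dotProduct, dotProduct_smul, smul_eq_mul, smul_eq_mul,
        ← mul_assoc, ← mul_inv, Real.mul_self_sqrt hb.le, inv_mul_cancel₀ hb.ne']
  intro m
  have hu1 : U m ⬝ᵥ U m = 1 := hnorm m
  have hw1 : U (m + 1) ⬝ᵥ U (m + 1) = 1 := hnorm (m + 1)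
  set u := U m with hudef
  have hune : u ≠ 0 := fun h => by simp [h] at hu1
  set v := B *ᵥ u with hvdef
  have hb : 0 < v ⬝ᵥ v := hselfpos _ (hvne _ hune)
  set a := u ⬝ᵥ (B *ᵥ u) with hadef
  set c := u ⬝ᵥ (B⁻¹ *ᵥ u) with hcdef
  have ha : 0 < a := by have := hPD.dotProduct_mulVec_pos hune; rwa [star_trivial] at this
  have hc : 0 < c := by have := hPDi.dotProduct_mulVec_pos hune; rwa [star_trivial] at this
  have hBinv_v : B⁻¹ *ᵥ v = u := by
    rw [hvdef, mulVec_mulVec, hinvB, one_mulVec]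
  have hvu : v ⬝ᵥ u = a := by rw [hadef, ← hvdef, dotProduct_comm]
  have hlhs : U (m + 1) ⬝ᵥ (B⁻¹ *ᵥ U (m + 1)) = (v ⬝ᵥ v)⁻¹ * a := by
    rw [hstep m, ← hvdef, mulVec_smul, smul_dotProduct, dotProduct_smul,
      smul_eq_mul, smul_eq_mul, hBinv_v, hvu, ← mul_assoc, ← mul_inv,
      Real.mul_self_sqrt hb.le]
  have cs1 : a ^ 2 ≤ v ⬝ᵥ v := by
    have h := cs_posdef (Matrix.PosDef.one (n := Fin n)) u v
    rw [one_mulVec, one_mulVec, hu1, one_mul] at h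
    calc a ^ 2 = (u ⬝ᵥ v) ^ 2 := by rw [hadef, hvdef]
      _ ≤ _ := h
  have cs2 : 1 ≤ a * c := by
    have h := cs_posdef hPDi v u
    rw [hBinv_v, hvu] at h
    have hv1 : v ⬝ᵥ (B⁻¹ *ᵥ u) = 1 := by
      rw [dot_symm hPDi.isHermitian, hBinv_v, hu1]
    rw [hv1, one_pow] at h
    exact h
  have key : U (m + 1) ⬝ᵥ (B⁻¹ *ᵥ U (m + 1)) ≤ u ⬝ᵥ (B⁻¹ *ᵥ u) := by
    rw [hlhs, ← hcdef]
    rw [inv_mul_le_iff₀ hb]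
    nlinarith
  refine ⟨?_, key⟩
  have hmul : ∀ x : Fin n → ℝ,
      x ⬝ᵥ (((1 / k) • (B⁻¹ - 1)) *ᵥ x) = (1 / k) * (x ⬝ᵥ (B⁻¹ *ᵥ x) - x ⬝ᵥ x) := by
    intro x
    rw [smul_mulVec, dotProduct_smul, smul_eq_mul, sub_mulVec, one_mulVec,
      dotProduct_sub]
  rw [hmul, hmul, hu1, hw1]
  have hk' : 0 ≤ 1 / k := by positivity
  exact mul_le_mul_of_nonneg_left (by linarith [key]) hk'
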